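/- Closed-loop trajectories are uniformly bounded: if e, θ̂ : ℝ → ℝ^m are differentiable and satisfy e'(t) = −J(θ) · K_s · J(θ̂(t))ᵀ · e(t) and θ̂'(t) = −Γ⁻¹ · Y(e(t), θ̂(t))ᵀ · e(t) for all t ≥ 0, with K_s positive semidefinite, then for all t ≥ 0 one has ‖e(t)‖² ≤ 2·V(0) and ‖θ̂(t) − θ‖² ≤ (2/Γ)·V(0), where V(0) := (1/2)‖e(0)‖² + (Γ/2)‖θ̂(0) − θ‖². -/

import Mathlib

open Matrix Filter Topology

/-- Deformation Jacobian `J(θ) = diag(θ) · C`. -/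
noncomputable def defJac {m k : ℕ} (C : Matrix (Fin m) (Fin (3*k)) ℝ) (θ : Fin m → ℝ) :
    Matrix (Fin m) (Fin (3*k)) ℝ :=
  Matrix.diagonal θ * C

/-- Regression matrix `Y(e, θ̂) = diag((C Kₛ Cᵀ diag(θ̂)) ·ᵥ e)`. -/
noncomputable def regY {m k : ℕ} (C : Matrix (Fin m) (Fin (3*k)) ℝ)
    (Ks : Matrix (Fin (3*k)) (Fin (3*k)) ℝ) (e θh : Fin m → ℝ) :
    Matrix (Fin m) (Fin m) ℝ :=
  Matrix.diagonal ((C * Ks * Cᵀ * Matrix.diagonal θh) *ᵥ e)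

lemma key_alg {m : ℕ} (A : Matrix (Fin m) (Fin m) ℝ) (θ θh ev : Fin m → ℝ) :
    ev ⬝ᵥ ((Matrix.diagonal θ * A * Matrix.diagonal θh) *ᵥ ev)
      + (θh - θ) ⬝ᵥ ((((A * Matrix.diagonal θh) *ᵥ ev)) * ev)
    = (θh * ev) ⬝ᵥ (A *ᵥ (θh * ev)) := by
  simp only [Matrix.mulVec, dotProduct, Matrix.mul_diagonal, Matrix.diagonal_mul,
    Pi.sub_apply, Pi.mul_apply]
  rw [← Finset.sum_add_distrib]
  refine Finset.sum_congr rfl fun i _ => ?_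
  simp only [Finset.sum_mul, Finset.mul_sum]
  rw [← Finset.sum_add_distrib]
  refine Finset.sum_congr rfl fun j _ => ?_
  ring

lemma deriv_val {m : ℕ} (A : Matrix (Fin m) (Fin m) ℝ) (Γ : ℝ) (hΓ : Γ ≠ 0)
    (θ θh ev : Fin m → ℝ) :
    (1/2 : ℝ) * (-(ev ⬝ᵥ ((Matrix.diagonal θ * A * Matrix.diagonal θh) *ᵥ ev))
        + -(((Matrix.diagonal θ * A * Matrix.diagonal θh) *ᵥ ev) ⬝ᵥ ev))
      + (Γ/2) * (-(Γ⁻¹ * ((θh - θ) ⬝ᵥ ((Matrix.diagonal ((A * Matrix.diagonal θh) *ᵥ ev)) *ᵥ ev)))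
        + -(Γ⁻¹ * (((Matrix.diagonal ((A * Matrix.diagonal θh) *ᵥ ev)) *ᵥ ev) ⬝ᵥ (θh - θ))))
    = -((θh * ev) ⬝ᵥ (A *ᵥ (θh * ev))) := by
  have hd : (Matrix.diagonal ((A * Matrix.diagonal θh) *ᵥ ev)) *ᵥ ev
      = ((A * Matrix.diagonal θh) *ᵥ ev) * ev := by
    ext i; simp [Matrix.mulVec_diagonal]
  rw [hd, dotProduct_comm (((Matrix.diagonal θ * A * Matrix.diagonal θh) *ᵥ ev)) ev,
    dotProduct_comm (((A * Matrix.diagonal θh) *ᵥ ev) * ev) (θh - θ),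
    ← key_alg A θ θh ev]
  field_simp
  ring

lemma inner_eq_dot {m : ℕ} (x y : EuclideanSpace ℝ (Fin m)) :
    (inner ℝ x y : ℝ) = (x : Fin m → ℝ) ⬝ᵥ (y : Fin m → ℝ) := by
  simp [PiLp.inner_apply, dotProduct, RCLike.inner_apply, mul_comm]

/-- closed-loop trajectories are uniformly bounded in terms of the initial
Lyapunov level: `‖e(t)‖² ≤ 2 V(0)` and `‖θ̂(t) − θ‖² ≤ (2/Γ) V(0)` for all `t ≥ 0`. -/
theorem closed_loop_trajectories_bounded
    (m k : ℕ) (hm : 0 < m) (hk : 0 < k)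
    (C : Matrix (Fin m) (Fin (3*k)) ℝ)
    (Ks : Matrix (Fin (3*k)) (Fin (3*k)) ℝ) (hKs : Ks.PosSemidef)
    (Γ : ℝ) (hΓ : 0 < Γ)
    (θ : EuclideanSpace ℝ (Fin m))
    (e θh : ℝ → EuclideanSpace ℝ (Fin m))
    (hdyn : ∀ t ≥ (0:ℝ),
      HasDerivAt e (WithLp.toLp 2 (-((defJac C θ * Ks * (defJac C (θh t))ᵀ) *ᵥ e t))) t)
    (hupd : ∀ t ≥ (0:ℝ),
      HasDerivAt θh (WithLp.toLp 2 (-(Γ⁻¹ • ((regY C Ks (e t) (θh t))ᵀ *ᵥ e t)))) t)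
    (V0 : ℝ)
    (hV0 : V0 = (1/2) * ‖e 0‖^2 + (Γ/2) * ‖θh 0 - θ‖^2) :
    ∀ t ≥ (0:ℝ), ‖e t‖^2 ≤ 2 * V0 ∧ ‖θh t - θ‖^2 ≤ (2/Γ) * V0 := by
  set A : Matrix (Fin m) (Fin m) ℝ := C * Ks * Cᵀ with hAdef
  have hA : A.PosSemidef := by
    have := hKs.mul_mul_conjTranspose_same C
    rwa [Matrix.conjTranspose_eq_transpose_of_trivial] at this
  have hJ : ∀ v : Fin m → ℝ, defJac C θ * Ks * (defJac C v)ᵀ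
      = Matrix.diagonal θ * A * Matrix.diagonal v := by
    intro v
    simp only [defJac, hAdef, Matrix.transpose_mul, Matrix.diagonal_transpose, Matrix.mul_assoc]
  have hYt : ∀ t : ℝ, (regY C Ks (e t) (θh t))ᵀ
      = Matrix.diagonal ((A * Matrix.diagonal (θh t)) *ᵥ (e t)) := by
    intro t
    simp only [regY, Matrix.diagonal_transpose, hAdef, Matrix.mul_assoc]
  set g : ℝ → ℝ := fun s => (1/2) * ‖e s‖^2 + (Γ/2) * ‖θh s - θ‖^2 with hgdef
  have hg : ∀ t ≥ (0:ℝ), ∃ d, d ≤ 0 ∧ HasDerivAt g d t := by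
    intro t ht
    have he' := hdyn t ht
    have hθ' := (hupd t ht).sub_const θ
    have h1 := (HasDerivAt.inner ℝ he' he').const_mul (1/2 : ℝ)
    have h2 := (HasDerivAt.inner ℝ hθ' hθ').const_mul (Γ/2 : ℝ)
    have hsum := h1.add h2
    have hgeq : g = fun s => (1/2) * (inner ℝ (e s) (e s) : ℝ)
        + (Γ/2) * (inner ℝ (θh s - θ) (θh s - θ) : ℝ) := by
      funext s; simp only [hgdef, real_inner_self_eq_norm_sq]
    replace hsum : HasDerivAt (fun s => (1/2) * (inner ℝ (e s) (e s) : ℝ)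
        + (Γ/2) * (inner ℝ (θh s - θ) (θh s - θ) : ℝ)) _ t := hsum
    rw [← hgeq] at hsum
    refine ⟨_, ?_, hsum⟩
    have hw := hA.dotProduct_mulVec_nonneg ((show Fin m → ℝ from θh t) * (show Fin m → ℝ from e t))
    simp only [star_trivial] at hw
    simp only [WithLp.toLp_neg, WithLp.toLp_smul, inner_neg_left, inner_neg_right, real_inner_smul_left, real_inner_smul_right,
      inner_eq_dot, WithLp.ofLp_toLp, WithLp.ofLp_sub, hJ, hYt]
    rw [deriv_val A Γ (ne_of_gt hΓ) θ (θh t) (e t)]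
    linarith
  have hanti : AntitoneOn g (Set.Ici 0) := by
    apply antitoneOn_of_deriv_nonpos (convex_Ici 0)
    · intro t ht
      obtain ⟨d, _, hd⟩ := hg t ht
      exact hd.continuousAt.continuousWithinAt
    · intro t ht
      rw [interior_Ici] at ht
      obtain ⟨d, _, hd⟩ := hg t (le_of_lt ht)
      exact hd.differentiableAt.differentiableWithinAt
    · intro t ht
      rw [interior_Ici] at ht
      obtain ⟨d, hd0, hd⟩ := hg t (le_of_lt ht)
      rw [hd.deriv]; exact hd0
  intro t ht
  have hle : g t ≤ g 0 := hanti (Set.self_mem_Ici) ht ht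
  have hg0 : g 0 = V0 := by rw [hV0]
  have h1 : (0:ℝ) ≤ (1/2) * ‖e t‖^2 := by positivity
  have h2 : (0:ℝ) ≤ (Γ/2) * ‖θh t - θ‖^2 := by positivity
  have hgt : g t = (1/2) * ‖e t‖^2 + (Γ/2) * ‖θh t - θ‖^2 := rfl
  rw [hgt, hg0] at hle
  constructor
  · nlinarith [hle, h1, h2]
  · rw [div_mul_eq_mul_div, le_div_iff₀ hΓ]
    nlinarith [hle, h1, h2]
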